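/- Let Σ be a symmetric positive semidefinite d×d matrix with smallest eigenvalue at least 1 and ‖Σ‖ ≤ C₁ for some C₁ ≥ 1. Fix w₀ ∈ ℝ^d, σ > 0, ε ∈ (0,1]. Define a sequence by ŵ^{(1)} = 0 and ŵ^{(r+1)} = ŵ^{(r)} − Δ^{(r)}/C₁, where each Δ^{(r)} ∈ ℝ^d satisfies ‖Δ^{(r)} − Σ(ŵ^{(r)} − w₀)‖ ≤ ½‖ŵ^{(r)} − w₀‖ + εσ/4. Then for every r, ‖ŵ^{(r+1)} − w₀‖ ≤ (1 − 1/(2C₁))^r ‖w₀‖ + εσ/2; in particular, if R ≥ 2C₁ ln(2‖w₀‖/(εσ)) then ‖ŵ^{(R+1)} − w₀‖ ≤ εσ. -/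

import Mathlib

open Matrix
open scoped RealInnerProductSpace

noncomputable def opNorm {d : ℕ} (M : Matrix (Fin d) (Fin d) ℝ) : ℝ :=
  ‖Matrix.toEuclideanCLM (𝕜 := ℝ) M‖

def fromE {d : ℕ} (x : EuclideanSpace ℝ (Fin d)) : Fin d → ℝ :=
  (WithLp.equiv 2 (Fin d → ℝ)) x

noncomputable def toE {d : ℕ} (x : Fin d → ℝ) : EuclideanSpace ℝ (Fin d) :=
  (WithLp.equiv 2 (Fin d → ℝ)).symm x

set_option maxHeartbeats 1000000 in
/-- Inexact gradient descent. `A` is symmetric PSD with eigenvalues in `[1, C₁]`,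
`ŵ^{(1)} = 0`, `ŵ^{(r+1)} = ŵ^{(r)} − Δ^{(r)}/C₁`, and each `Δ^{(r)}` satisfies
`‖Δ^{(r)} − A(ŵ^{(r)} − w₀)‖ ≤ ½‖ŵ^{(r)} − w₀‖ + εσ/4`. Then for every `r`,
`‖ŵ^{(r+1)} − w₀‖ ≤ (1 − 1/(2C₁))^r ‖w₀‖ + εσ/2`; in particular, if
`R ≥ 2C₁ ln(2‖w₀‖/(εσ))` then `‖ŵ^{(R+1)} − w₀‖ ≤ εσ`. -/
theorem gradient_descent_rounds {d : ℕ} (C₁ σ ε : ℝ)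
    (hC₁ : 1 ≤ C₁) (hσ : 0 < σ) (hε : 0 < ε) (hε1 : ε ≤ 1)
    (A : Matrix (Fin d) (Fin d) ℝ) (hSym : A.IsHermitian)
    (hlow : ∀ v : EuclideanSpace ℝ (Fin d), ‖v‖ ^ 2 ≤ ⟪v, toE (A.mulVec (fromE v))⟫)
    (hup : opNorm A ≤ C₁)
    (w₀ : EuclideanSpace ℝ (Fin d)) (w Δ : ℕ → EuclideanSpace ℝ (Fin d))
    (hw1 : w 1 = 0)
    (hrec : ∀ r, 1 ≤ r → w (r + 1) = w r - C₁⁻¹ • Δ r)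
    (hΔ : ∀ r, 1 ≤ r → ‖Δ r - toE (A.mulVec (fromE (w r - w₀)))‖
      ≤ (1 / 2) * ‖w r - w₀‖ + ε * σ / 4) :
    (∀ r : ℕ, ‖w (r + 1) - w₀‖ ≤ (1 - 1 / (2 * C₁)) ^ r * ‖w₀‖ + ε * σ / 2) ∧
    (∀ R : ℕ, 2 * C₁ * Real.log (2 * ‖w₀‖ / (ε * σ)) ≤ R →
      ‖w (R + 1) - w₀‖ ≤ ε * σ) := by
  have hC₁0 : (0 : ℝ) < C₁ := lt_of_lt_of_le one_pos hC₁
  set T : EuclideanSpace ℝ (Fin d) →L[ℝ] EuclideanSpace ℝ (Fin d) :=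
    Matrix.toEuclideanCLM (𝕜 := ℝ) A with hT
  have hTv : ∀ v : EuclideanSpace ℝ (Fin d), T v = toE (A.mulVec (fromE v)) := by
    intro v
    rw [hT]; rfl
  have hsymm : ∀ u v : EuclideanSpace ℝ (Fin d), ⟪T u, v⟫ = ⟪u, T v⟫ := by
    have hs := Matrix.isHermitian_iff_isSymmetric.mp hSym
    intro u v
    have := hs u v
    simpa [hT, ← Matrix.coe_toEuclideanCLM_eq_toEuclideanLin] using this
  have hlow' : ∀ v : EuclideanSpace ℝ (Fin d), ‖v‖ ^ 2 ≤ ⟪v, T v⟫ := by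
    intro v; rw [hTv]; exact hlow v
  have hup' : ∀ v : EuclideanSpace ℝ (Fin d), ‖T v‖ ≤ C₁ * ‖v‖ := by
    intro v
    exact le_trans (T.le_opNorm v) (mul_le_mul_of_nonneg_right hup (norm_nonneg v))
  set c : ℝ := 1 - 1 / C₁ with hc
  have hc0 : 0 ≤ c := by
    rw [hc]
    have : 1 / C₁ ≤ 1 := by
      rw [div_le_one hC₁0]; exact hC₁
    linarith
  set B : EuclideanSpace ℝ (Fin d) →L[ℝ] EuclideanSpace ℝ (Fin d) :=
    ContinuousLinearMap.id ℝ _ - C₁⁻¹ • T with hB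
  have hBapply : ∀ v : EuclideanSpace ℝ (Fin d), B v = v - C₁⁻¹ • T v := by
    intro v; simp [hB]
  have hBsymm : ∀ u v : EuclideanSpace ℝ (Fin d), ⟪B u, v⟫ = ⟪u, B v⟫ := by
    intro u v
    simp only [hBapply, inner_sub_left, inner_sub_right, real_inner_smul_left,
      real_inner_smul_right, hsymm]
  have hq0 : ∀ v : EuclideanSpace ℝ (Fin d), 0 ≤ ⟪v, B v⟫ := by
    intro v
    have h1 : ⟪v, T v⟫ ≤ ‖v‖ * ‖T v‖ := real_inner_le_norm v (T v)
    have h2 : ‖v‖ * ‖T v‖ ≤ ‖v‖ * (C₁ * ‖v‖) :=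
      mul_le_mul_of_nonneg_left (hup' v) (norm_nonneg v)
    have h3 : ⟪v, B v⟫ = ‖v‖ ^ 2 - C₁⁻¹ * ⟪v, T v⟫ := by
      rw [hBapply, inner_sub_right, real_inner_smul_right, real_inner_self_eq_norm_sq]
    rw [h3]
    have hCinv : 0 < C₁⁻¹ := inv_pos.mpr hC₁0
    have hmul : C₁⁻¹ * ⟪v, T v⟫ ≤ C₁⁻¹ * (‖v‖ * (C₁ * ‖v‖)) :=
      mul_le_mul_of_nonneg_left (le_trans h1 h2) (le_of_lt hCinv)
    have heq : C₁⁻¹ * (‖v‖ * (C₁ * ‖v‖)) = ‖v‖ ^ 2 := by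
      field_simp
    nlinarith
  have hq1 : ∀ v : EuclideanSpace ℝ (Fin d), ⟪v, B v⟫ ≤ c * ‖v‖ ^ 2 := by
    intro v
    have h3 : ⟪v, B v⟫ = ‖v‖ ^ 2 - C₁⁻¹ * ⟪v, T v⟫ := by
      rw [hBapply, inner_sub_right, real_inner_smul_right, real_inner_self_eq_norm_sq]
    rw [h3, hc]
    have hCinv : 0 < C₁⁻¹ := inv_pos.mpr hC₁0
    have hmul : C₁⁻¹ * ‖v‖ ^ 2 ≤ C₁⁻¹ * ⟪v, T v⟫ :=
      mul_le_mul_of_nonneg_left (hlow' v) (le_of_lt hCinv)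
    have heq : (1 - 1 / C₁) * ‖v‖ ^ 2 = ‖v‖ ^ 2 - C₁⁻¹ * ‖v‖ ^ 2 := by
      field_simp
    linarith
  have hCS : ∀ u v : EuclideanSpace ℝ (Fin d),
      ⟪u, B v⟫ ^ 2 ≤ ⟪u, B u⟫ * ⟪v, B v⟫ := by
    intro u v
    have h1 : ⟪v, B u⟫ = ⟪u, B v⟫ := by
      rw [real_inner_comm]; exact hBsymm u v
    have hpos : ∀ t : ℝ, 0 ≤ ⟪v, B v⟫ * (t * t) + (2 * ⟪u, B v⟫) * t + ⟪u, B u⟫ := by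
      intro t
      have expand : ⟪u + t • v, B (u + t • v)⟫
          = ⟪v, B v⟫ * (t * t) + (2 * ⟪u, B v⟫) * t + ⟪u, B u⟫ := by
        rw [map_add, B.map_smul]
        simp only [inner_add_left, inner_add_right, real_inner_smul_left,
          real_inner_smul_right, h1]
        ring
      rw [← expand]; exact hq0 _
    have hd := discrim_le_zero hpos
    rw [discrim] at hd
    nlinarith
  have hBnorm : ∀ v : EuclideanSpace ℝ (Fin d), ‖B v‖ ≤ c * ‖v‖ := by
    intro v
    by_cases hv : B v = 0
    · rw [hv, norm_zero]
      exact mul_nonneg hc0 (norm_nonneg v)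
    · have hbv : 0 < ‖B v‖ := norm_pos_iff.mpr hv
      have h1 := hCS (B v) v
      have h2 : ⟪B v, B v⟫ = ‖B v‖ ^ 2 := real_inner_self_eq_norm_sq (B v)
      have h3 : ⟪B v, B (B v)⟫ ≤ c * ‖B v‖ ^ 2 := hq1 (B v)
      have h4 : ⟪v, B v⟫ ≤ c * ‖v‖ ^ 2 := hq1 v
      have h5 : 0 ≤ ⟪v, B v⟫ := hq0 v
      have h6 : 0 ≤ ⟪B v, B (B v)⟫ := hq0 (B v)
      have hmul : ⟪B v, B (B v)⟫ * ⟪v, B v⟫ ≤ (c * ‖B v‖ ^ 2) * (c * ‖v‖ ^ 2) :=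
        mul_le_mul h3 h4 h5 (by positivity)
      have hsq : ‖B v‖ ^ 2 ≤ (c * ‖v‖) ^ 2 := by
        nlinarith [mul_pos hbv hbv]
      nlinarith [mul_nonneg hc0 (norm_nonneg v)]
  -- the one-step contraction
  have step : ∀ r : ℕ, 1 ≤ r →
      ‖w (r + 1) - w₀‖ ≤ (1 - 1 / (2 * C₁)) * ‖w r - w₀‖ + ε * σ / (4 * C₁) := by
    intro r hr
    have key : w (r + 1) - w₀
        = B (w r - w₀) - C₁⁻¹ • (Δ r - T (w r - w₀)) := by
      rw [hrec r hr, hBapply, smul_sub]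
      abel
    rw [key]
    have h1 : ‖B (w r - w₀) - C₁⁻¹ • (Δ r - T (w r - w₀))‖
        ≤ ‖B (w r - w₀)‖ + ‖C₁⁻¹ • (Δ r - T (w r - w₀))‖ := norm_sub_le _ _
    have h2 : ‖C₁⁻¹ • (Δ r - T (w r - w₀))‖ = C₁⁻¹ * ‖Δ r - T (w r - w₀)‖ := by
      rw [norm_smul, Real.norm_eq_abs, abs_of_pos (inv_pos.mpr hC₁0)]
    have h3 : ‖Δ r - T (w r - w₀)‖ ≤ (1 / 2) * ‖w r - w₀‖ + ε * σ / 4 := by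
      rw [hTv]; exact hΔ r hr
    have h4 := hBnorm (w r - w₀)
    have hCinv : 0 < C₁⁻¹ := inv_pos.mpr hC₁0
    have h5 : C₁⁻¹ * ‖Δ r - T (w r - w₀)‖
        ≤ C₁⁻¹ * ((1 / 2) * ‖w r - w₀‖ + ε * σ / 4) :=
      mul_le_mul_of_nonneg_left h3 (le_of_lt hCinv)
    have heq : c * ‖w r - w₀‖ + C₁⁻¹ * ((1 / 2) * ‖w r - w₀‖ + ε * σ / 4)
        = (1 - 1 / (2 * C₁)) * ‖w r - w₀‖ + ε * σ / (4 * C₁) := by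
      rw [hc]; ring
    calc ‖B (w r - w₀) - C₁⁻¹ • (Δ r - T (w r - w₀))‖
        ≤ ‖B (w r - w₀)‖ + ‖C₁⁻¹ • (Δ r - T (w r - w₀))‖ := h1
      _ = ‖B (w r - w₀)‖ + C₁⁻¹ * ‖Δ r - T (w r - w₀)‖ := by rw [h2]
      _ ≤ c * ‖w r - w₀‖ + C₁⁻¹ * ((1 / 2) * ‖w r - w₀‖ + ε * σ / 4) := add_le_add h4 h5
      _ = (1 - 1 / (2 * C₁)) * ‖w r - w₀‖ + ε * σ / (4 * C₁) := heq
  set ρ : ℝ := 1 - 1 / (2 * C₁) with hρ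
  have hρ0 : 0 ≤ ρ := by
    rw [hρ]
    have : 1 / (2 * C₁) ≤ 1 / 2 := one_div_le_one_div_of_le two_pos (by linarith)
    linarith
  have hρ1 : ρ ≤ 1 := by
    rw [hρ]
    have : 0 < 1 / (2 * C₁) := by positivity
    linarith
  have part1 : ∀ r : ℕ, ‖w (r + 1) - w₀‖ ≤ ρ ^ r * ‖w₀‖ + ε * σ / 2 := by
    intro r
    induction r with
    | zero =>
      rw [hw1]
      simp only [pow_zero, one_mul, zero_sub, norm_neg]
      have : 0 < ε * σ := mul_pos hε hσ
      linarith
    | succ r ih =>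
      have hstep := step (r + 1) (Nat.le_add_left 1 r)
      have h1 : ρ * ‖w (r + 1) - w₀‖ ≤ ρ * (ρ ^ r * ‖w₀‖ + ε * σ / 2) :=
        mul_le_mul_of_nonneg_left ih hρ0
      have heq : ρ * (ρ ^ r * ‖w₀‖ + ε * σ / 2) + ε * σ / (4 * C₁)
          = ρ ^ (r + 1) * ‖w₀‖ + ε * σ / 2 := by
        rw [hρ, pow_succ]; ring
      calc ‖w (r + 1 + 1) - w₀‖ ≤ ρ * ‖w (r + 1) - w₀‖ + ε * σ / (4 * C₁) := hstep
        _ ≤ ρ * (ρ ^ r * ‖w₀‖ + ε * σ / 2) + ε * σ / (4 * C₁) := by linarith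
        _ = ρ ^ (r + 1) * ‖w₀‖ + ε * σ / 2 := heq
  refine ⟨part1, ?_⟩
  intro R hR
  have hεσ : 0 < ε * σ := mul_pos hε hσ
  have hmain : ρ ^ R * ‖w₀‖ ≤ ε * σ / 2 := by
    by_cases hsmall : 2 * ‖w₀‖ ≤ ε * σ
    · have hle1 : ρ ^ R ≤ 1 := pow_le_one₀ hρ0 hρ1
      have h1 : ρ ^ R * ‖w₀‖ ≤ 1 * ‖w₀‖ :=
        mul_le_mul_of_nonneg_right hle1 (norm_nonneg w₀)
      linarith
    · push_neg at hsmall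
      have hw₀pos : 0 < ‖w₀‖ := by nlinarith
      have hxpos : 0 < 2 * ‖w₀‖ / (ε * σ) := by positivity
      set L := Real.log (2 * ‖w₀‖ / (ε * σ)) with hL
      have h2C : (0 : ℝ) < 2 * C₁ := by linarith
      have hexp1 : ρ ≤ Real.exp (-(1 / (2 * C₁))) := by
        have := Real.add_one_le_exp (-(1 / (2 * C₁)))
        rw [hρ]; linarith
      have hexp2 : ρ ^ R ≤ Real.exp (-(1 / (2 * C₁))) ^ R :=
        pow_le_pow_left₀ hρ0 hexp1 R
      have hexp3 : Real.exp (-(1 / (2 * C₁))) ^ R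
          = Real.exp ((R : ℝ) * (-(1 / (2 * C₁)))) := (Real.exp_nat_mul _ R).symm
      have hle : (R : ℝ) * (-(1 / (2 * C₁))) ≤ -L := by
        have h2 : L * (2 * C₁) ≤ (R : ℝ) := by linarith [hR]
        have h3 : L ≤ (R : ℝ) / (2 * C₁) := (le_div_iff₀ h2C).mpr h2
        have h4 : (R : ℝ) * (-(1 / (2 * C₁))) = -((R : ℝ) / (2 * C₁)) := by ring
        rw [h4]
        linarith
      have hexp4 : Real.exp ((R : ℝ) * (-(1 / (2 * C₁)))) ≤ Real.exp (-L) :=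
        Real.exp_le_exp.mpr hle
      have hexp5 : Real.exp (-L) = ε * σ / (2 * ‖w₀‖) := by
        rw [hL, Real.exp_neg, Real.exp_log hxpos]
        field_simp
      have hfin : ρ ^ R ≤ ε * σ / (2 * ‖w₀‖) := by
        calc ρ ^ R ≤ Real.exp (-(1 / (2 * C₁))) ^ R := hexp2
          _ = Real.exp ((R : ℝ) * (-(1 / (2 * C₁)))) := hexp3
          _ ≤ Real.exp (-L) := hexp4
          _ = ε * σ / (2 * ‖w₀‖) := hexp5
      have hm : ρ ^ R * ‖w₀‖ ≤ ε * σ / (2 * ‖w₀‖) * ‖w₀‖ :=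
        mul_le_mul_of_nonneg_right hfin (norm_nonneg w₀)
      have heq : ε * σ / (2 * ‖w₀‖) * ‖w₀‖ = ε * σ / 2 := by
        field_simp
      linarith
  have := part1 R
  linarith
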